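/- Correctness of the full secret-shared comparison pipeline: let a, b ∈ Z_{2^l} with canonical representatives less than 2^{l-2}, shared additively as a = [a]_0 + [a]_1 and b = [b]_0 + [b]_1 in Z_{2^l}. Let f = a − b in Z_{2^l}, with x = [f]_0 = [a]_0 − [b]_0 and y = [f]_1 = [a]_1 − [b]_1. Then the XOR of the (l−1)-th bits of x and y with the carry c_{l−1} of the binary addition of x and y equals the MSB of f, which equals 1 if and only if a < b. -/
import Mathlib


/-- The carry sequence of binary addition of `x` and `y`:
`c 0 = false`, `c (i+1) = x_i·y_i ⊕ c_i·(x_i ⊕ y_i)`. -/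
def addCarry (x y : ℕ) : ℕ → Bool
  | 0 => false
  | i + 1 => xor (x.testBit i && y.testBit i)
      (addCarry x y i && xor (x.testBit i) (y.testBit i))

private lemma bitdecomp (n i : ℕ) :
    n % 2 ^ (i + 1) = n % 2 ^ i + 2 ^ i * (n.testBit i).toNat := by
  have h2 : n / 2 ^ i % 2 < 2 := Nat.mod_lt _ (by norm_num)
  have ht : (n.testBit i).toNat = n / 2 ^ i % 2 := by
    rw [Nat.testBit_eq_decide_div_mod_eq]
    rcases Nat.mod_two_eq_zero_or_one (n / 2 ^ i) with h | h <;> simp [h]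
  rw [ht, pow_succ, Nat.mod_mul]

private lemma carry_spec (x y : ℕ) : ∀ i,
    x % 2 ^ i + y % 2 ^ i = (x + y) % 2 ^ i + 2 ^ i * (addCarry x y i).toNat := by
  intro i
  induction i with
  | zero => simp [addCarry, Nat.mod_one]
  | succ i ih =>
    have hxd := bitdecomp x i
    have hyd := bitdecomp y i
    have hzd := bitdecomp (x + y) i
    set xi := x.testBit i
    set yi := y.testBit i
    set ci := addCarry x y i
    set zi := (x + y).testBit i
    have hsum : xi.toNat + yi.toNat + ci.toNat
        = (xor (xor xi yi) ci).toNat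
          + 2 * (xor (xi && yi) (ci && xor xi yi)).toNat := by
      cases xi <;> cases yi <;> cases ci <;> decide
    -- congruence mod 2^(i+1)
    have hmod : (x % 2 ^ (i + 1) + y % 2 ^ (i + 1)) % 2 ^ (i + 1)
        = (x + y) % 2 ^ (i + 1) := by
      exact (Nat.add_mod x y (2 ^ (i + 1))).symm
    have hrw : x % 2 ^ (i + 1) + y % 2 ^ (i + 1)
        = ((x + y) % 2 ^ i + 2 ^ i * (xor (xor xi yi) ci).toNat)
          + 2 ^ (i + 1) * (xor (xi && yi) (ci && xor xi yi)).toNat := by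
      rw [hxd, hyd]
      have : x % 2 ^ i + 2 ^ i * xi.toNat + (y % 2 ^ i + 2 ^ i * yi.toNat)
          = (x % 2 ^ i + y % 2 ^ i) + 2 ^ i * (xi.toNat + yi.toNat) := by ring
      rw [this, ih]
      have h2 : (x + y) % 2 ^ i + 2 ^ i * ci.toNat + 2 ^ i * (xi.toNat + yi.toNat)
          = (x + y) % 2 ^ i + 2 ^ i * (xi.toNat + yi.toNat + ci.toNat) := by ring
      rw [h2, hsum, pow_succ]
      ring
    have hlt : (x + y) % 2 ^ i + 2 ^ i * (xor (xor xi yi) ci).toNat < 2 ^ (i + 1) := by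
      have h1 : (x + y) % 2 ^ i < 2 ^ i := Nat.mod_lt _ (by positivity)
      have h2 : (xor (xor xi yi) ci).toNat ≤ 1 := Bool.toNat_le _
      have h3 : 2 ^ i * (xor (xor xi yi) ci).toNat ≤ 2 ^ i := by
        calc 2 ^ i * (xor (xor xi yi) ci).toNat ≤ 2 ^ i * 1 :=
              Nat.mul_le_mul_left _ h2
          _ = 2 ^ i := by ring
      rw [pow_succ]
      omega
    have hkey : (x + y) % 2 ^ (i + 1)
        = (x + y) % 2 ^ i + 2 ^ i * (xor (xor xi yi) ci).toNat := by
      rw [← hmod, hrw, Nat.add_mul_mod_self_left, Nat.mod_eq_of_lt hlt]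
    rw [hrw, hkey]
    show _ = _ + 2 ^ (i + 1) * (addCarry x y (i + 1)).toNat
    rw [addCarry]

private lemma testBit_add_eq (x y i : ℕ) :
    (x + y).testBit i = xor (xor (x.testBit i) (y.testBit i)) (addCarry x y i) := by
  have h1 := carry_spec x y i
  have h2 := carry_spec x y (i + 1)
  have hxd := bitdecomp x i
  have hyd := bitdecomp y i
  have hzd := bitdecomp (x + y) i
  rw [hxd, hyd, hzd] at h2
  rw [show addCarry x y (i + 1) = xor (x.testBit i && y.testBit i)
      (addCarry x y i && xor (x.testBit i) (y.testBit i)) from rfl] at h2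
  have hp : 0 < 2 ^ i := by positivity
  cases hz : (x + y).testBit i <;> cases hcx : x.testBit i <;> cases hcy : y.testBit i <;>
    cases hcc : addCarry x y i <;>
    simp_all [pow_succ] <;> omega

private lemma testBit_of_lt (m i : ℕ) (h : m < 2 ^ (i + 1)) :
    m.testBit i = decide (2 ^ i ≤ m) := by
  have hp : 0 < 2 ^ i := by positivity
  have hq : m / 2 ^ i < 2 := by
    rw [Nat.div_lt_iff_lt_mul hp]; rw [pow_succ] at h; omega
  rw [Nat.testBit_eq_decide_div_mod_eq]
  by_cases hc : 2 ^ i ≤ m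
  · have h1 : 1 ≤ m / 2 ^ i := (Nat.one_le_div_iff hp).mpr hc
    have : m / 2 ^ i = 1 := by omega
    simp [this, hc]
  · have : m / 2 ^ i = 0 := Nat.div_eq_of_lt (lt_of_not_ge hc)
    simp [this, hc]

theorem scmp_pipeline_correct (l : ℕ) (hl : 3 ≤ l)
    (a b a0 a1 b0 b1 : ZMod (2 ^ l))
    (ha : a0 + a1 = a) (hb : b0 + b1 = b)
    (hav : a.val < 2 ^ (l - 2)) (hbv : b.val < 2 ^ (l - 2))
    (x y : ℕ) (hx : x = (a0 - b0).val) (hy : y = (a1 - b1).val) :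
    (xor (xor (x.testBit (l - 1)) (y.testBit (l - 1))) (addCarry x y (l - 1)) =
      (a - b).val.testBit (l - 1)) ∧
    ((a - b).val.testBit (l - 1) = true ↔ a.val < b.val) := by
  haveI : NeZero (2 ^ l) := ⟨by positivity⟩
  -- sizes
  have h4 : 2 ^ l = 4 * 2 ^ (l - 2) := by
    have e : 2 ^ l = 2 ^ (2 + (l - 2)) := by congr 1; omega
    rw [e, pow_add]; norm_num
  have h2 : 2 ^ (l - 1) = 2 * 2 ^ (l - 2) := by
    have e : 2 ^ (l - 1) = 2 ^ (1 + (l - 2)) := by congr 1; omega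
    rw [e, pow_add]; norm_num
  have hM : 0 < 2 ^ (l - 2) := by positivity
  have hlsucc : l = (l - 1) + 1 := by omega
  -- x + y is congruent to (a-b).val mod 2^l
  have hcast : ((x + y : ℕ) : ZMod (2 ^ l)) = a - b := by
    push_cast [hx, hy, ZMod.natCast_val, ZMod.cast_id]
    rw [← ha, ← hb]; ring
  have hfv : (a - b).val = (x + y) % 2 ^ l := by
    rw [← hcast, ZMod.val_natCast]
  have hbit : (a - b).val.testBit (l - 1) = (x + y).testBit (l - 1) := by
    rw [hfv]
    conv_lhs => rw [hlsucc]
    rw [Nat.testBit_mod_two_pow]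
    simp
  constructor
  · rw [hbit, testBit_add_eq]
  · -- compute (a - b).val explicitly
    have hble : b.val ≤ 2 ^ l := le_of_lt (ZMod.val_lt b)
    have hcast2 : ((a.val + (2 ^ l - b.val) : ℕ) : ZMod (2 ^ l)) = a - b := by
      rw [Nat.cast_add, Nat.cast_sub hble]
      simp [ZMod.natCast_val, ZMod.cast_id, ZMod.natCast_self]
      ring
    have hval : (a - b).val = (a.val + (2 ^ l - b.val)) % 2 ^ l := by
      rw [← hcast2, ZMod.val_natCast]
    have hvlt : (a - b).val < 2 ^ ((l - 1) + 1) := by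
      rw [← hlsucc]; exact ZMod.val_lt _
    rw [testBit_of_lt _ _ hvlt, hval]
    by_cases hab : b.val ≤ a.val
    · have : a.val + (2 ^ l - b.val) = (a.val - b.val) + 2 ^ l := by omega
      rw [this, Nat.add_mod_right, Nat.mod_eq_of_lt (by omega)]
      simp only [decide_eq_true_eq]
      omega
    · have hlt : a.val + (2 ^ l - b.val) < 2 ^ l := by omega
      rw [Nat.mod_eq_of_lt hlt]
      simp only [decide_eq_true_eq]
      omega
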